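/- Any permutation σ ∈ S_{2n} can be written as σ = η τ̃ ξ where η, ξ ∈ S_n[S_2] and τ̃ is a permutation fixing all odd numbers 1,3,…,2n−1 and permuting only the even numbers; i.e., the double coset S_n[S_2]\S_{2n}/S_n[S_2] has a representative supported on the even positions. -/

import Mathlib

/-- Σ₀ on `Fin n × Bool`, modelling `(1 2)(3 4)⋯(2n−1 2n) ∈ S_{2n}`, under the
identification `2k−1 ↔ (k, false)`, `2k ↔ (k, true)`. -/
def sigma0 (n : ℕ) : Equiv.Perm (Fin n × Bool) :=
  Equiv.prodCongr (Equiv.refl (Fin n)) (Equiv.swap false true)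

lemma sigma0_apply {n : ℕ} (p : Fin n × Bool) : sigma0 n p = (p.1, !p.2) := by
  obtain ⟨k, b⟩ := p
  cases b <;> simp [sigma0]

/-- Sign-change permutation. -/
def signPerm {n : ℕ} (c : Fin n → Bool) : Equiv.Perm (Fin n × Bool) where
  toFun p := (p.1, xor p.2 (c p.1))
  invFun p := (p.1, xor p.2 (c p.1))
  left_inv p := by obtain ⟨k, b⟩ := p; cases b <;> cases h : c k <;> simp [h]
  right_inv p := by obtain ⟨k, b⟩ := p; cases b <;> cases h : c k <;> simp [h]

lemma signPerm_mem {n : ℕ} (c : Fin n → Bool) :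
    signPerm c ∈ Subgroup.centralizer {sigma0 n} := by
  rw [Subgroup.mem_centralizer_iff]
  intro h hh
  simp only [Set.mem_singleton_iff] at hh
  subst hh
  ext p
  · simp [Equiv.Perm.mul_apply, sigma0_apply, signPerm]
  · obtain ⟨k, b⟩ := p
    cases b <;> cases h : c k <;>
      simp [Equiv.Perm.mul_apply, sigma0_apply, signPerm, h]

lemma prodCongr_mem {n : ℕ} (G : Equiv.Perm (Fin n)) :
    Equiv.prodCongr G (Equiv.refl Bool) ∈ Subgroup.centralizer {sigma0 n} := by
  rw [Subgroup.mem_centralizer_iff]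
  intro h hh
  simp only [Set.mem_singleton_iff] at hh
  subst hh
  ext p <;> obtain ⟨k, b⟩ := p <;>
    simp [Equiv.Perm.mul_apply, sigma0_apply]

theorem stmt8 (n : ℕ) (σ : Equiv.Perm (Fin n × Bool)) :
    ∃ η τ ξ : Equiv.Perm (Fin n × Bool),
      η ∈ Subgroup.centralizer {sigma0 n} ∧ ξ ∈ Subgroup.centralizer {sigma0 n} ∧
        (∀ k : Fin n, τ (k, false) = (k, false)) ∧ σ = η * τ * ξ := by
  classical
  -- the pair of candidate images for each k
  set t : Fin n → Finset (Fin n) :=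
    fun k => {(σ (k, false)).1, (σ (k, true)).1} with ht
  -- Hall condition
  have hall : ∀ s : Finset (Fin n), s.card ≤ (s.biUnion t).card := by
    intro s
    have key : (s ×ˢ (Finset.univ : Finset Bool)).card ≤
        ((s.biUnion t) ×ˢ (Finset.univ : Finset Bool)).card := by
      apply Finset.card_le_card_of_injOn (fun p => σ p)
      · rintro ⟨k, b⟩ hp
        simp only [Finset.mem_coe, Finset.mem_product, Finset.mem_univ, and_true] at hp ⊢
        refine Finset.mem_biUnion.2 ⟨k, hp, ?_⟩
        cases b <;> simp [ht]
      · exact Function.Injective.injOn (σ.injective)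
    simpa [Finset.card_product] using key
  obtain ⟨f, hf, hft⟩ :=
    (Finset.all_card_le_biUnion_card_iff_exists_injective t).1 hall
  -- choose signs realizing f
  set c : Fin n → Bool := fun k => if f k = (σ (k, false)).1 then false else true with hc
  have hgc : ∀ k, (σ (k, c k)).1 = f k := by
    intro k
    by_cases h : f k = (σ (k, false)).1
    · simp [hc, h]
    · have := hft k
      simp only [ht, Finset.mem_insert, Finset.mem_singleton] at this
      rcases this with h' | h'
      · exact absurd h' h
      · simp [hc, h, h'.symm]
  have hg : Function.Injective fun k => (σ (k, c k)).1 := by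
    intro a b hab
    apply hf
    rw [← hgc a, ← hgc b]
    exact hab
  set G : Equiv.Perm (Fin n) :=
    Equiv.ofBijective _ (Finite.injective_iff_bijective.1 hg) with hG
  set d : Fin n → Bool := fun k => (σ (k, c k)).2 with hd
  set η : Equiv.Perm (Fin n × Bool) :=
    Equiv.prodCongr G (Equiv.refl Bool) * signPerm d with hη
  set ξ : Equiv.Perm (Fin n × Bool) := signPerm c with hξ
  refine ⟨η, η⁻¹ * σ * ξ⁻¹, ξ, ?_, signPerm_mem c, ?_, by group⟩
  · exact Subgroup.mul_mem _ (prodCongr_mem G) (signPerm_mem d)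
  · intro k
    have hξinv : ξ⁻¹ ((k : Fin n), false) = (k, c k) := by
      have : ξ (k, c k) = (k, false) := by
        simp only [hξ, signPerm, Equiv.coe_fn_mk]
        cases h : c k <;> simp [h]
      rw [← this, Equiv.Perm.inv_def, Equiv.symm_apply_apply]
    have hηapp : η ((k : Fin n), false) = σ (k, c k) := by
      simp only [hη, Equiv.Perm.mul_apply, signPerm, Equiv.coe_fn_mk,
        Equiv.prodCongr_apply, Prod.map, Equiv.refl_apply]
      have h1 : G k = (σ (k, c k)).1 := by simp [hG, Equiv.ofBijective_apply]
      rw [h1]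
      simp [hd]
    simp only [Equiv.Perm.mul_apply, hξinv, ← hηapp, Equiv.Perm.inv_def η, Equiv.symm_apply_apply]
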